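/- If φ has no satisfying assignment (¬∃ Z, φ Z), then every finset X with X ∈ F' and X ∈ G' satisfies X.card ≤ n − 1. -/

import Mathlib

open Sum

private lemma aux_card_le {n I : ℕ} (ℓ : Fin n)
    (X : Finset ((Fin n × Bool) ⊕ Fin I))
    (hF : ∀ i : Fin n, ¬(inl (i, true) ∈ X ∧ inl (i, false) ∈ X))
    (hinl : ∀ x ∈ X, ∃ p : Fin n × Bool, x = inl p)
    (ht : inl (ℓ, true) ∉ X) (hf : inl (ℓ, false) ∉ X) :
    X.card ≤ n - 1 := by
  have key : X.card ≤ (Finset.univ.erase ℓ : Finset (Fin n)).card := by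
    apply Finset.card_le_card_of_injOn
      (Sum.elim (fun p => p.1) (fun _ => ℓ))
    · intro x hx
      obtain ⟨⟨i, b⟩, rfl⟩ := hinl x hx
      simp only [Sum.elim_inl, Finset.mem_coe, Finset.mem_erase, Finset.mem_univ, and_true]
      rintro rfl
      cases b
      · exact hf hx
      · exact ht hx
    · intro x hx y hy hxy
      obtain ⟨⟨i, b⟩, rfl⟩ := hinl x hx
      obtain ⟨⟨j, c⟩, rfl⟩ := hinl y hy
      simp only [Sum.elim_inl] at hxy
      subst hxy
      cases b <;> cases c
      · rfl
      · exact absurd ⟨hy, hx⟩ (hF i)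
      · exact absurd ⟨hx, hy⟩ (hF i)
      · rfl
  simpa [Finset.card_erase_of_mem] using key

/-- If `φ` has no satisfying assignment, then every set in the
intersection `F' ∩ G'` of the padded construction has size at most `n − 1`. -/
theorem unsat_intersection_small (n I : ℕ) (hn : 1 ≤ n) (hI : 1 ≤ I)
    (φ : (Fin n → Bool) → Prop)
    (ℓ : Fin n) (hℓ : (ℓ : ℕ) = n - 1)
    (F' A B C G' : Set (Finset ((Fin n × Bool) ⊕ Fin I)))
    (hF' : F' = {X : Finset ((Fin n × Bool) ⊕ Fin I) |
      ∀ i : Fin n, ¬(inl (i, true) ∈ X ∧ inl (i, false) ∈ X)})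
    (hA : A = {X : Finset ((Fin n × Bool) ⊕ Fin I) |
      (∀ x ∈ X, ∃ p : Fin n × Bool, x = inl p) ∧ X.card ≤ n ∧
      inl (ℓ, true) ∉ X ∧ inl (ℓ, false) ∉ X})
    (hB : B = {X : Finset ((Fin n × Bool) ⊕ Fin I) |
      (∀ x ∈ X, ∃ p : Fin n × Bool, x = inl p) ∧ X.card = n ∧
      (∀ i : Fin n, (inl (i, true) ∈ X ∨ inl (i, false) ∈ X) ∧
        ¬(inl (i, true) ∈ X ∧ inl (i, false) ∈ X)) ∧
      φ (fun i => decide (inl (i, true) ∈ X))})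
    (hC : C = {X : Finset ((Fin n × Bool) ⊕ Fin I) |
      ∃ Y ∈ A ∪ B, ∃ Q : Finset ((Fin n × Bool) ⊕ Fin I),
        Y.card = n ∧ Q.Nonempty ∧ (∀ x ∈ Q, ∃ j : Fin I, x = inr j) ∧
        X = Y ∪ Q})
    (hG' : G' = A ∪ B ∪ C)
    (hunsat : ¬∃ Z : Fin n → Bool, φ Z) :
    ∀ X : Finset ((Fin n × Bool) ⊕ Fin I),
      X ∈ F' → X ∈ G' → X.card ≤ n - 1 := by
  intro X hXF hXG
  rw [hF'] at hXF
  have hBempty : ∀ Y, Y ∉ B := by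
    intro Y hY
    rw [hB] at hY
    exact hunsat ⟨_, hY.2.2.2⟩
  rw [hG'] at hXG
  rcases hXG with (hXA | hXB) | hXC
  · rw [hA] at hXA
    exact aux_card_le ℓ X hXF hXA.1 hXA.2.2.1 hXA.2.2.2
  · exact absurd hXB (hBempty X)
  · rw [hC] at hXC
    obtain ⟨Y, hY, Q, hYn, hQne, hQ, rfl⟩ := hXC
    rcases hY with hYA | hYB
    · rw [hA] at hYA
      have hYF : ∀ i : Fin n, ¬(inl (i, true) ∈ Y ∧ inl (i, false) ∈ Y) := by
        intro i ⟨h1, h2⟩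
        exact hXF i ⟨Finset.mem_union_left _ h1, Finset.mem_union_left _ h2⟩
      have := aux_card_le ℓ Y hYF hYA.1 hYA.2.2.1 hYA.2.2.2
      omega
    · exact absurd hYB (hBempty Y)
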